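/- arXiv:2409.14687 — 2 statements merged into one kernel-verified Lean document; each statement's English description precedes it below -/
import Mathlib

section
/- (Error estimate of the Sinkhorn divergence) For ε > 0 and probability vectors μ ∈ ℝ^N, ν ∈ ℝ^M with strictly positive entries, define the Sinkhorn divergence SD_ε(μ,ν) := OT_ε(μ,ν) − (1/2)OT_ε(μ,μ) − (1/2)OT_ε(ν,ν). Then |SD_ε(μ,ν) − OT(μ,ν)| ≤ 2 ε log(NM). -/
open Finset

def IsProbVec {N : ℕ} (μ : Fin N → ℝ) : Prop :=
  (∀ i, 0 < μ i) ∧ ∑ i, μ i = 1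

def IsCoupling {N M : ℕ} (μ : Fin N → ℝ) (ν : Fin M → ℝ)
    (π : Fin N → Fin M → ℝ) : Prop :=
  (∀ i j, 0 ≤ π i j) ∧ (∀ i, ∑ j, π i j = μ i) ∧ (∀ j, ∑ i, π i j = ν j)

/-- Kullback–Leibler divergence of a coupling `π` relative to `μ ⊗ ν`
(with the convention `0 * log 0 = 0`, which holds since `Real.log 0 = 0`). -/
noncomputable def klDiv {N M : ℕ} (μ : Fin N → ℝ) (ν : Fin M → ℝ)
    (π : Fin N → Fin M → ℝ) : ℝ :=
  ∑ i, ∑ j, π i j * Real.log (π i j / (μ i * ν j))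

/-- Shannon entropy. -/
noncomputable def shannonEntropy {N : ℕ} (μ : Fin N → ℝ) : ℝ :=
  -∑ i, μ i * Real.log (μ i)

/-- Pairing `⟨C, π⟩` of a cost matrix with a transport plan. -/
noncomputable def costInner {N M : ℕ} (C : Matrix (Fin N) (Fin M) ℝ)
    (π : Fin N → Fin M → ℝ) : ℝ :=
  ∑ i, ∑ j, C i j * π i j

/-- Unregularized optimal transport cost. -/
noncomputable def OT {N M : ℕ} (C : Matrix (Fin N) (Fin M) ℝ)
    (μ : Fin N → ℝ) (ν : Fin M → ℝ) : ℝ :=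
  sInf {x | ∃ π, IsCoupling μ ν π ∧ x = costInner C π}

/-- Entropic optimal transport cost. -/
noncomputable def OTeps {N M : ℕ} (ε : ℝ) (C : Matrix (Fin N) (Fin M) ℝ)
    (μ : Fin N → ℝ) (ν : Fin M → ℝ) : ℝ :=
  sInf {x | ∃ π, IsCoupling μ ν π ∧ x = costInner C π + ε * klDiv μ ν π}

section Aux

variable {N M : ℕ} {C : Matrix (Fin N) (Fin M) ℝ} {μ : Fin N → ℝ} {ν : Fin M → ℝ}

lemma prodCoupling (hμ : IsProbVec μ) (hν : IsProbVec ν) :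
    IsCoupling μ ν (fun i j => μ i * ν j) := by
  refine ⟨fun i j => mul_nonneg (hμ.1 i).le (hν.1 j).le, fun i => ?_, fun j => ?_⟩
  · simp [← Finset.mul_sum, hν.2]
  · simp [← Finset.sum_mul, hμ.2]

lemma klDiv_prod (hμ : IsProbVec μ) (hν : IsProbVec ν) :
    klDiv μ ν (fun i j => μ i * ν j) = 0 := by
  unfold klDiv
  refine Finset.sum_eq_zero fun i _ => Finset.sum_eq_zero fun j _ => ?_
  rw [div_self (mul_pos (hμ.1 i) (hν.1 j)).ne', Real.log_one, mul_zero]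

lemma costInner_nonneg (hC : ∀ i j, 0 ≤ C i j) {π : Fin N → Fin M → ℝ}
    (hπ : ∀ i j, 0 ≤ π i j) : 0 ≤ costInner C π :=
  Finset.sum_nonneg fun i _ => Finset.sum_nonneg fun j _ =>
    mul_nonneg (hC i j) (hπ i j)

lemma klDiv_nonneg (hμ : IsProbVec μ) (hν : IsProbVec ν)
    {π : Fin N → Fin M → ℝ} (h : IsCoupling μ ν π) : 0 ≤ klDiv μ ν π := by
  have key : ∀ i j, π i j - μ i * ν j ≤ π i j * Real.log (π i j / (μ i * ν j)) := by
    intro i j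
    have hb : 0 < μ i * ν j := mul_pos (hμ.1 i) (hν.1 j)
    rcases eq_or_lt_of_le (h.1 i j) with hp | hp
    · simp [← hp]; linarith
    · have h1 : Real.log ((μ i * ν j) / π i j) ≤ (μ i * ν j) / π i j - 1 :=
        Real.log_le_sub_one_of_pos (by positivity)
      have h2 : Real.log ((μ i * ν j) / π i j) = Real.log (μ i * ν j) - Real.log (π i j) :=
        Real.log_div hb.ne' hp.ne'
      have h3 : Real.log (π i j / (μ i * ν j)) = Real.log (π i j) - Real.log (μ i * ν j) :=
        Real.log_div hp.ne' hb.ne'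
      have h4 : π i j * ((μ i * ν j) / π i j) = μ i * ν j := by field_simp
      nlinarith [mul_le_mul_of_nonneg_left h1 hp.le]
  calc (0:ℝ) = ∑ i, ∑ j, (π i j - μ i * ν j) := by
        have e1 : ∑ i, ∑ j, π i j = 1 := by simp [h.2.1, hμ.2]
        have e2 : ∑ i, ∑ j, μ i * ν j = 1 := by
          simp [← Finset.mul_sum, hν.2, hμ.2]
        simp [Finset.sum_sub_distrib, e1, e2]
    _ ≤ klDiv μ ν π := by
        unfold klDiv
        exact Finset.sum_le_sum fun i _ => Finset.sum_le_sum fun j _ => key i j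

lemma neg_entropy_le {K : ℕ} {p : Fin K → ℝ} (hp : IsProbVec p) :
    -∑ i, p i * Real.log (p i) ≤ Real.log K := by
  rcases Nat.eq_zero_or_pos K with hK | hK
  · subst hK; simp
  have hKR : (0:ℝ) < K := by exact_mod_cast hK
  have key : ∀ i, -(p i * Real.log (p i)) ≤ p i * Real.log K + (1/K - p i) := by
    intro i
    have hpi := hp.1 i
    have h1 : Real.log (1/((K:ℝ) * p i)) ≤ 1/((K:ℝ) * p i) - 1 :=
      Real.log_le_sub_one_of_pos (by positivity)
    have h2 : Real.log (1/((K:ℝ) * p i)) = -(Real.log K + Real.log (p i)) := by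
      rw [one_div, Real.log_inv, Real.log_mul hKR.ne' hpi.ne']
    have h3 : p i * (1/((K:ℝ) * p i)) = 1/K := by field_simp
    nlinarith [mul_le_mul_of_nonneg_left h1 hpi.le]
  calc -∑ i, p i * Real.log (p i) = ∑ i, -(p i * Real.log (p i)) := by
        rw [Finset.sum_neg_distrib]
    _ ≤ ∑ i, (p i * Real.log K + (1/K - p i)) := Finset.sum_le_sum fun i _ => key i
    _ = Real.log K := by
        rw [Finset.sum_add_distrib, Finset.sum_sub_distrib, ← Finset.sum_mul, hp.2]
        simp [Finset.card_univ]
        field_simp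
        norm_num

lemma klDiv_le_log (hμ : IsProbVec μ) (hν : IsProbVec ν)
    {π : Fin N → Fin M → ℝ} (h : IsCoupling μ ν π) :
    klDiv μ ν π ≤ Real.log N + Real.log M := by
  have hterm : ∀ i j, π i j * Real.log (π i j / (μ i * ν j)) =
      π i j * Real.log (π i j) - π i j * (Real.log (μ i) + Real.log (ν j)) := by
    intro i j
    have hb : 0 < μ i * ν j := mul_pos (hμ.1 i) (hν.1 j)
    rcases eq_or_lt_of_le (h.1 i j) with hp | hp
    · simp [← hp]
    · rw [Real.log_div hp.ne' hb.ne', Real.log_mul (hμ.1 i).ne' (hν.1 j).ne']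
      ring
  have hπle1 : ∀ i j, π i j ≤ 1 := by
    intro i j
    have h1 : π i j ≤ μ i := by
      rw [← h.2.1 i]
      exact Finset.single_le_sum (fun j' _ => h.1 i j') (Finset.mem_univ j)
    have h2 : μ i ≤ 1 := by
      rw [← hμ.2]
      exact Finset.single_le_sum (fun i' _ => (hμ.1 i').le) (Finset.mem_univ i)
    linarith
  have hent : ∑ i, ∑ j, π i j * Real.log (π i j) ≤ 0 :=
    Finset.sum_nonpos fun i _ => Finset.sum_nonpos fun j _ =>
      mul_nonpos_of_nonneg_of_nonpos (h.1 i j)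
        (Real.log_nonpos (h.1 i j) (hπle1 i j))
  have hmarg : ∑ i, ∑ j, π i j * (Real.log (μ i) + Real.log (ν j)) =
      (∑ i, μ i * Real.log (μ i)) + (∑ j, ν j * Real.log (ν j)) := by
    have e1 : ∑ i, ∑ j, π i j * Real.log (μ i) = ∑ i, μ i * Real.log (μ i) := by
      refine Finset.sum_congr rfl fun i _ => ?_
      rw [← Finset.sum_mul, h.2.1 i]
    have e2 : ∑ i, ∑ j, π i j * Real.log (ν j) = ∑ j, ν j * Real.log (ν j) := by
      rw [Finset.sum_comm]
      refine Finset.sum_congr rfl fun j _ => ?_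
      rw [← Finset.sum_mul, h.2.2 j]
    simp only [mul_add, Finset.sum_add_distrib, e1, e2]
  have hH1 : -∑ i, μ i * Real.log (μ i) ≤ Real.log N := neg_entropy_le hμ
  have hH2 : -∑ j, ν j * Real.log (ν j) ≤ Real.log M := neg_entropy_le hν
  have : klDiv μ ν π = (∑ i, ∑ j, π i j * Real.log (π i j)) -
      ∑ i, ∑ j, π i j * (Real.log (μ i) + Real.log (ν j)) := by
    unfold klDiv
    rw [← Finset.sum_sub_distrib]
    refine Finset.sum_congr rfl fun i _ => ?_
    rw [← Finset.sum_sub_distrib]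
    exact Finset.sum_congr rfl fun j _ => hterm i j
  rw [this, hmarg]
  linarith

-- OT / OTeps basic facts
lemma OTset_nonempty (hμ : IsProbVec μ) (hν : IsProbVec ν) :
    {x | ∃ π, IsCoupling μ ν π ∧ x = costInner C π}.Nonempty :=
  ⟨costInner C (fun i j => μ i * ν j), ⟨_, prodCoupling hμ hν, rfl⟩⟩

lemma OTepsset_nonempty (ε : ℝ) (hμ : IsProbVec μ) (hν : IsProbVec ν) :
    {x | ∃ π, IsCoupling μ ν π ∧ x = costInner C π + ε * klDiv μ ν π}.Nonempty :=
  ⟨_, ⟨_, prodCoupling hμ hν, rfl⟩⟩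

lemma OTset_bdd (hC : ∀ i j, 0 ≤ C i j) :
    BddBelow {x | ∃ π, IsCoupling μ ν π ∧ x = costInner C π} :=
  ⟨0, fun x ⟨π, hπ, hx⟩ => hx ▸ costInner_nonneg hC hπ.1⟩

lemma OTepsset_bdd {ε : ℝ} (hε : 0 ≤ ε) (hC : ∀ i j, 0 ≤ C i j)
    (hμ : IsProbVec μ) (hν : IsProbVec ν) :
    BddBelow {x | ∃ π, IsCoupling μ ν π ∧ x = costInner C π + ε * klDiv μ ν π} := by
  refine ⟨0, fun x ⟨π, hπ, hx⟩ => ?_⟩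
  have := costInner_nonneg hC hπ.1
  have := klDiv_nonneg hμ hν hπ
  have := mul_nonneg hε (klDiv_nonneg hμ hν hπ)
  linarith [hx.ge, hx.le]

lemma OT_nonneg (hC : ∀ i j, 0 ≤ C i j) (hμ : IsProbVec μ) (hν : IsProbVec ν) :
    0 ≤ OT C μ ν :=
  le_csInf (OTset_nonempty hμ hν) fun x ⟨π, hπ, hx⟩ => hx ▸ costInner_nonneg hC hπ.1

lemma OT_le_OTeps {ε : ℝ} (hε : 0 ≤ ε) (hC : ∀ i j, 0 ≤ C i j)
    (hμ : IsProbVec μ) (hν : IsProbVec ν) :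
    OT C μ ν ≤ OTeps ε C μ ν := by
  refine le_csInf (OTepsset_nonempty ε hμ hν) fun x ⟨π, hπ, hx⟩ => ?_
  have h1 : OT C μ ν ≤ costInner C π := csInf_le (OTset_bdd hC) ⟨π, hπ, rfl⟩
  have h2 : 0 ≤ ε * klDiv μ ν π := mul_nonneg hε (klDiv_nonneg hμ hν hπ)
  linarith [hx.le]

lemma OTeps_le_OT_add {ε : ℝ} (hε : 0 ≤ ε) (hC : ∀ i j, 0 ≤ C i j)
    (hμ : IsProbVec μ) (hν : IsProbVec ν) :
    OTeps ε C μ ν ≤ OT C μ ν + ε * (Real.log N + Real.log M) := by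
  have : OTeps ε C μ ν - ε * (Real.log N + Real.log M) ≤ OT C μ ν := by
    refine le_csInf (OTset_nonempty hμ hν) fun x ⟨π, hπ, hx⟩ => ?_
    have h1 : OTeps ε C μ ν ≤ costInner C π + ε * klDiv μ ν π :=
      csInf_le (OTepsset_bdd hε hC hμ hν) ⟨π, hπ, rfl⟩
    have h2 : ε * klDiv μ ν π ≤ ε * (Real.log N + Real.log M) :=
      mul_le_mul_of_nonneg_left (klDiv_le_log hμ hν hπ) hε
    linarith [hx.le]
  linarith

lemma OTeps_nonneg {ε : ℝ} (hε : 0 ≤ ε) (hC : ∀ i j, 0 ≤ C i j)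
    (hμ : IsProbVec μ) (hν : IsProbVec ν) : 0 ≤ OTeps ε C μ ν :=
  le_csInf (OTepsset_nonempty ε hμ hν) fun x ⟨π, hπ, hx⟩ => by
    have h1 := costInner_nonneg hC hπ.1
    have h2 := mul_nonneg hε (klDiv_nonneg hμ hν hπ)
    linarith [hx.le]

lemma OT_self_zero {C : Matrix (Fin N) (Fin N) ℝ} (hC : ∀ i j, 0 ≤ C i j)
    (hd : ∀ i, C i i = 0) (hμ : IsProbVec μ) : OT C μ μ = 0 := by
  refine le_antisymm ?_ (OT_nonneg hC hμ hμ)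
  have hcoup : IsCoupling μ μ (fun i j => if i = j then μ i else 0) := by
    refine ⟨fun i j => ?_, fun i => ?_, fun j => ?_⟩
    · dsimp only; split <;> simp [(hμ.1 _).le]
    · simp
    · simp
  have hcost : costInner C (fun i j => if i = j then μ i else 0) = 0 := by
    unfold costInner
    refine Finset.sum_eq_zero fun i _ => ?_
    simp [mul_ite, Finset.sum_ite_eq, hd]
  have := csInf_le (OTset_bdd hC) (⟨_, hcoup, rfl⟩ :
    costInner C (fun i j => if i = j then μ i else 0) ∈
      {x | ∃ π, IsCoupling μ μ π ∧ x = costInner C π})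
  rw [hcost] at this
  exact this

lemma probVec_pos {K : ℕ} {p : Fin K → ℝ} (hp : IsProbVec p) : 0 < K := by
  rcases Nat.eq_zero_or_pos K with h | h
  · subst h; simpa using hp.2
  · exact h

end Aux

/-- Error estimate of the Sinkhorn divergence:
with cost matrices given by squared Euclidean distances of the support points,
`|SD_ε(μ,ν) − OT(μ,ν)| ≤ 2 ε log (N M)`. -/
theorem sinkhorn_divergence_error {N M d : ℕ} (ε : ℝ) (hε : 0 < ε)
    (x : Fin N → Fin d → ℝ) (y : Fin M → Fin d → ℝ)
    (μ : Fin N → ℝ) (ν : Fin M → ℝ) (hμ : IsProbVec μ) (hν : IsProbVec ν)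
    (Cxy : Matrix (Fin N) (Fin M) ℝ) (Cxx : Matrix (Fin N) (Fin N) ℝ)
    (Cyy : Matrix (Fin M) (Fin M) ℝ)
    (hCxy : ∀ i j, Cxy i j = ∑ t, (x i t - y j t) ^ 2)
    (hCxx : ∀ i j, Cxx i j = ∑ t, (x i t - x j t) ^ 2)
    (hCyy : ∀ i j, Cyy i j = ∑ t, (y i t - y j t) ^ 2) :
    |(OTeps ε Cxy μ ν - (1 / 2) * OTeps ε Cxx μ μ - (1 / 2) * OTeps ε Cyy ν ν)
        - OT Cxy μ ν| ≤ 2 * ε * Real.log ((N : ℝ) * (M : ℝ)) := by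
  have hN : 0 < N := probVec_pos hμ
  have hM : 0 < M := probVec_pos hν
  have hlN : 0 ≤ Real.log N := Real.log_nonneg (by exact_mod_cast hN)
  have hlM : 0 ≤ Real.log M := Real.log_nonneg (by exact_mod_cast hM)
  have hlmul : Real.log ((N : ℝ) * (M : ℝ)) = Real.log N + Real.log M :=
    Real.log_mul (by positivity) (by positivity)
  have hCxy' : ∀ i j, 0 ≤ Cxy i j := fun i j => by
    rw [hCxy]; positivity
  have hCxx' : ∀ i j, 0 ≤ Cxx i j := fun i j => by
    rw [hCxx]; positivity
  have hCyy' : ∀ i j, 0 ≤ Cyy i j := fun i j => by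
    rw [hCyy]; positivity
  have hdx : ∀ i, Cxx i i = 0 := fun i => by simp [hCxx]
  have hdy : ∀ j, Cyy j j = 0 := fun j => by simp [hCyy]
  have h1 : OT Cxy μ ν ≤ OTeps ε Cxy μ ν := OT_le_OTeps hε.le hCxy' hμ hν
  have h2 : OTeps ε Cxy μ ν ≤ OT Cxy μ ν + ε * (Real.log N + Real.log M) :=
    OTeps_le_OT_add hε.le hCxy' hμ hν
  have h3 : 0 ≤ OTeps ε Cxx μ μ := OTeps_nonneg hε.le hCxx' hμ hμ
  have h4 : OTeps ε Cxx μ μ ≤ OT Cxx μ μ + ε * (Real.log N + Real.log N) :=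
    OTeps_le_OT_add hε.le hCxx' hμ hμ
  have h5 : 0 ≤ OTeps ε Cyy ν ν := OTeps_nonneg hε.le hCyy' hν hν
  have h6 : OTeps ε Cyy ν ν ≤ OT Cyy ν ν + ε * (Real.log M + Real.log M) :=
    OTeps_le_OT_add hε.le hCyy' hν hν
  rw [OT_self_zero hCxx' hdx hμ] at h4
  rw [OT_self_zero hCyy' hdy hν] at h6
  rw [mul_add] at h2 h4 h6
  have e1 : 0 ≤ ε * Real.log N := mul_nonneg hε.le hlN
  have e2 : 0 ≤ ε * Real.log M := mul_nonneg hε.le hlM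
  rw [abs_le, hlmul]
  constructor <;> nlinarith [e1, e2, h1, h2, h3, h4, h5, h6]
end

section
/- (Error estimate of Sinkhorn MDS, abstract form) Let B and B_ε be N×N real symmetric positive semidefinite matrices with eigenvalues λ_1 ≥ ... ≥ λ_N and λ_{1,ε} ≥ ... ≥ λ_{N,ε}, and orthonormal eigenvectors v_1,...,v_N and v_{1,ε},...,v_{N,ε} chosen so that ⟨v_{j,ε}, v_j⟩ ≥ 0. Fix k ≤ N with λ_k > λ_{k+1} and λ_k > 0 (set λ_{N+1} = −∞). Define embeddings Φ(i) = (λ_1^{1/2}v_1(i),...,λ_k^{1/2}v_k(i)) and Φ_ε(i) analogously with B_ε. Then Σ_{i=1}^N ‖Φ_ε(i) − Φ(i)‖² ≤ (16 λ_1 k / (λ_k − λ_{k+1})²) ‖B_ε − B‖_2² + 2k ‖B_ε − B‖_2, assuming the Davis–Kahan bound Σ_{j=1}^k sin²θ_j ≤ 4k‖B_ε−B‖_2²/(λ_k−λ_{k+1})² where θ_j = arccos⟨v_{j,ε}, v_j⟩. -/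
set_option maxHeartbeats 1000000

open Finset

/-- Operator (spectral) norm of a real matrix, i.e. the norm of the induced
linear map between Euclidean spaces. -/
noncomputable def opNorm {N M : ℕ} (A : Matrix (Fin M) (Fin N) ℝ) : ℝ :=
  ‖LinearMap.toContinuousLinearMap (Matrix.toEuclideanLin A)‖

/-- Frobenius norm of a real matrix. -/
noncomputable def frobNorm {N M : ℕ} (A : Matrix (Fin M) (Fin N) ℝ) : ℝ :=
  Real.sqrt (∑ i, ∑ j, (A i j) ^ 2)

private lemma opNorm_nonneg' {N M : ℕ} (A : Matrix (Fin M) (Fin N) ℝ) : 0 ≤ opNorm A :=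
  norm_nonneg _

private lemma opNorm_sub_comm' {N : ℕ} (A B : Matrix (Fin N) (Fin N) ℝ) :
    opNorm (A - B) = opNorm (B - A) := by
  unfold opNorm
  rw [show A - B = -(B - A) from (neg_sub B A).symm, map_neg, map_neg, norm_neg]

private lemma inner_sum_smul {m : ℕ} {E : Type*} [NormedAddCommGroup E]
    [InnerProductSpace ℝ E] {W : Fin m → E} (hW : Orthonormal ℝ W) (f g : Fin m → ℝ) :
    (inner ℝ (∑ i, f i • W i) (∑ i, g i • W i) : ℝ) = ∑ i, f i * g i := by
  have h := orthonormal_iff_ite.mp hW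
  simp only [sum_inner, inner_sum, real_inner_smul_left, real_inner_smul_right, h,
    mul_ite, mul_one, mul_zero]
  simp [Finset.sum_ite_eq', mul_comm]

private lemma sqrt_sub_sq_le_abs {a b : ℝ} (ha : 0 ≤ a) (hb : 0 ≤ b) :
    (Real.sqrt a - Real.sqrt b) ^ 2 ≤ |a - b| := by
  rcases le_total b a with h | h
  · rw [abs_of_nonneg (by linarith)]
    nlinarith [Real.sq_sqrt ha, Real.sq_sqrt hb, Real.sqrt_nonneg b,
      mul_nonneg (sub_nonneg.2 (Real.sqrt_le_sqrt h)) (Real.sqrt_nonneg b)]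
  · rw [abs_of_nonpos (by linarith)]
    nlinarith [Real.sq_sqrt ha, Real.sq_sqrt hb, Real.sqrt_nonneg a,
      mul_nonneg (sub_nonneg.2 (Real.sqrt_le_sqrt h)) (Real.sqrt_nonneg a)]

private lemma eV_orthonormal {N : ℕ} {v : Fin N → Fin N → ℝ}
    (hv : ∀ i j, (∑ x, v i x * v j x) = if i = j then (1:ℝ) else 0) :
    Orthonormal ℝ (fun i => (WithLp.equiv 2 (Fin N → ℝ)).symm (v i)) := by
  rw [orthonormal_iff_ite]
  intro i j
  simpa [PiLp.inner_apply, RCLike.inner_apply, mul_comm] using hv i j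

private lemma eV_eig {N : ℕ} {B : Matrix (Fin N) (Fin N) ℝ} {lam : Fin N → ℝ}
    {v : Fin N → Fin N → ℝ}
    (h : ∀ j, B.mulVec (v j) = lam j • v j) (j : Fin N) :
    Matrix.toEuclideanLin B ((WithLp.equiv 2 (Fin N → ℝ)).symm (v j))
      = lam j • (WithLp.equiv 2 (Fin N → ℝ)).symm (v j) := by
  rw [show (WithLp.equiv 2 (Fin N → ℝ)).symm (v j) = WithLp.toLp 2 (v j) from rfl,
    Matrix.toEuclideanLin_apply_piLp_toLp, h j]
  rfl

/-- One-sided Weyl inequality, proved from scratch by a dimension-counting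
subspace intersection argument. -/
private lemma weyl_one_sided {N : ℕ} (B Be : Matrix (Fin N) (Fin N) ℝ)
    (lam lame : Fin N → ℝ)
    (hlam : ∀ i j : Fin N, i ≤ j → lam j ≤ lam i)
    (hlame : ∀ i j : Fin N, i ≤ j → lame j ≤ lame i)
    (v ve : Fin N → Fin N → ℝ)
    (hv_on : ∀ i j, (∑ x, v i x * v j x) = if i = j then (1 : ℝ) else 0)
    (hve_on : ∀ i j, (∑ x, ve i x * ve j x) = if i = j then (1 : ℝ) else 0)
    (hv_eig : ∀ j, B.mulVec (v j) = lam j • v j)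
    (hve_eig : ∀ j, Be.mulVec (ve j) = lame j • ve j)
    (j : Fin N) :
    lam j - lame j ≤ opNorm (Be - B) := by
  classical
  set V : Fin N → EuclideanSpace ℝ (Fin N) :=
    fun i => (WithLp.equiv 2 (Fin N → ℝ)).symm (v i) with hVdef
  set Ve : Fin N → EuclideanSpace ℝ (Fin N) :=
    fun i => (WithLp.equiv 2 (Fin N → ℝ)).symm (ve i) with hVedef
  have hV : Orthonormal ℝ V := eV_orthonormal hv_on
  have hVe : Orthonormal ℝ Ve := eV_orthonormal hve_on
  have hj := j.isLt
  have hjN : (j : ℕ) + 1 ≤ N := hj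
  set e1 : Fin ((j:ℕ)+1) → Fin N := Fin.castLE hjN with he1def
  set e2 : Fin (N - (j:ℕ)) → Fin N :=
    (fun i => ⟨(j:ℕ) + (i:ℕ), by have := i.isLt; omega⟩) with he2def
  have he1 : Function.Injective e1 := Fin.castLE_injective _
  have he2 : Function.Injective e2 := by
    intro a b hab
    have : (j:ℕ) + (a:ℕ) = (j:ℕ) + (b:ℕ) := congrArg Fin.val hab
    exact Fin.ext (by omega)
  set S := Submodule.span ℝ (Set.range (V ∘ e1)) with hSdef
  set T := Submodule.span ℝ (Set.range (Ve ∘ e2)) with hTdef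
  have hS : Module.finrank ℝ S = (j:ℕ) + 1 := by
    rw [finrank_span_eq_card ((hV.comp e1 he1).linearIndependent)]
    simp
  have hT : Module.finrank ℝ T = N - (j:ℕ) := by
    rw [finrank_span_eq_card ((hVe.comp e2 he2).linearIndependent)]
    simp
  have hsum := Submodule.finrank_sup_add_finrank_inf_eq S T
  have hle : Module.finrank ℝ ↥(S ⊔ T) ≤ N :=
    le_trans (Submodule.finrank_le _) (le_of_eq finrank_euclideanSpace_fin)
  have hposrank : 0 < Module.finrank ℝ ↥(S ⊓ T) := by omega
  obtain ⟨x, hx0⟩ := Module.finrank_pos_iff_exists_ne_zero.mp hposrank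
  set w : EuclideanSpace ℝ (Fin N) := (x : EuclideanSpace ℝ (Fin N)) with hwdef
  have hw0 : w ≠ 0 := fun h => hx0 (Subtype.ext h)
  have hwS : w ∈ S := (Submodule.mem_inf.mp x.2).1
  have hwT : w ∈ T := (Submodule.mem_inf.mp x.2).2
  obtain ⟨c, hc⟩ := Submodule.mem_span_range_iff_exists_fun ℝ |>.mp hwS
  obtain ⟨d, hd⟩ := Submodule.mem_span_range_iff_exists_fun ℝ |>.mp hwT
  have hWc : Orthonormal ℝ (V ∘ e1) := hV.comp e1 he1
  have hWd : Orthonormal ℝ (Ve ∘ e2) := hVe.comp e2 he2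
  have hLB : (inner ℝ w ((Matrix.toEuclideanLin B) w) : ℝ) = ∑ i, c i ^ 2 * lam (e1 i) := by
    rw [← hc, map_sum]
    simp_rw [map_smul]
    have : ∀ i, Matrix.toEuclideanLin B ((V ∘ e1) i) = lam (e1 i) • (V ∘ e1) i :=
      fun i => eV_eig hv_eig (e1 i)
    simp_rw [this, smul_smul]
    rw [inner_sum_smul hWc]
    exact Finset.sum_congr rfl fun i _ => by ring
  have hLBe : (inner ℝ w ((Matrix.toEuclideanLin Be) w) : ℝ) = ∑ i, d i ^ 2 * lame (e2 i) := by
    rw [← hd, map_sum]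
    simp_rw [map_smul]
    have : ∀ i, Matrix.toEuclideanLin Be ((Ve ∘ e2) i) = lame (e2 i) • (Ve ∘ e2) i :=
      fun i => eV_eig hve_eig (e2 i)
    simp_rw [this, smul_smul]
    rw [inner_sum_smul hWd]
    exact Finset.sum_congr rfl fun i _ => by ring
  have hwwc : (inner ℝ w (w) : ℝ) = ∑ i, c i ^ 2 := by
    rw [← hc, inner_sum_smul hWc]
    exact Finset.sum_congr rfl fun i _ => (sq (c i)).symm
  have hwwd : (inner ℝ w (w) : ℝ) = ∑ i, d i ^ 2 := by
    rw [← hd, inner_sum_smul hWd]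
    exact Finset.sum_congr rfl fun i _ => (sq (d i)).symm
  have hnw : 0 < (inner ℝ w (w) : ℝ) := by
    rw [real_inner_self_eq_norm_mul_norm]
    exact mul_pos (norm_pos_iff.mpr hw0) (norm_pos_iff.mpr hw0)
  have h1 : lam j * (inner ℝ w (w) : ℝ) ≤ (inner ℝ w ((Matrix.toEuclideanLin B) w) : ℝ) := by
    rw [hLB, hwwc, Finset.mul_sum]
    refine Finset.sum_le_sum fun i _ => ?_
    rw [mul_comm (lam j)]
    exact mul_le_mul_of_nonneg_left
      (hlam (e1 i) j (by simp [he1def, Fin.le_def]; omega)) (sq_nonneg _)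
  have h2 : (inner ℝ w ((Matrix.toEuclideanLin Be) w) : ℝ) ≤ lame j * (inner ℝ w (w) : ℝ) := by
    rw [hLBe, hwwd, Finset.mul_sum]
    refine Finset.sum_le_sum fun i _ => ?_
    rw [mul_comm (lame j)]
    exact mul_le_mul_of_nonneg_left
      (hlame j (e2 i) (by simp [he2def, Fin.le_def])) (sq_nonneg _)
  have hdiff : (inner ℝ w ((Matrix.toEuclideanLin (Be - B)) w) : ℝ)
      = (inner ℝ w ((Matrix.toEuclideanLin Be) w) : ℝ)
        - (inner ℝ w ((Matrix.toEuclideanLin B) w) : ℝ) := by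
    rw [map_sub]
    simp [inner_sub_right]
  have h3 : |(inner ℝ w ((Matrix.toEuclideanLin (Be - B)) w) : ℝ)|
      ≤ opNorm (Be - B) * (inner ℝ w (w) : ℝ) := by
    calc |(inner ℝ w ((Matrix.toEuclideanLin (Be - B)) w) : ℝ)|
        ≤ ‖w‖ * ‖(Matrix.toEuclideanLin (Be - B)) w‖ := abs_real_inner_le_norm _ _
      _ ≤ ‖w‖ * (opNorm (Be - B) * ‖w‖) := by
          refine mul_le_mul_of_nonneg_left ?_ (norm_nonneg _)
          have : (Matrix.toEuclideanLin (Be - B)) w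
              = LinearMap.toContinuousLinearMap (Matrix.toEuclideanLin (Be - B)) w := by
            simp
          rw [this]
          exact ContinuousLinearMap.le_opNorm _ _
      _ = opNorm (Be - B) * (inner ℝ w (w) : ℝ) := by
          rw [real_inner_self_eq_norm_mul_norm]; ring
  have h4 := abs_le.mp h3
  nlinarith [h4.1, h4.2, h1, h2, hnw, hdiff]

private lemma weyl_abs {N : ℕ} (B Be : Matrix (Fin N) (Fin N) ℝ)
    (lam lame : Fin N → ℝ)
    (hlam : ∀ i j : Fin N, i ≤ j → lam j ≤ lam i)
    (hlame : ∀ i j : Fin N, i ≤ j → lame j ≤ lame i)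
    (v ve : Fin N → Fin N → ℝ)
    (hv_on : ∀ i j, (∑ x, v i x * v j x) = if i = j then (1 : ℝ) else 0)
    (hve_on : ∀ i j, (∑ x, ve i x * ve j x) = if i = j then (1 : ℝ) else 0)
    (hv_eig : ∀ j, B.mulVec (v j) = lam j • v j)
    (hve_eig : ∀ j, Be.mulVec (ve j) = lame j • ve j)
    (j : Fin N) :
    |lame j - lam j| ≤ opNorm (Be - B) := by
  rw [abs_sub_le_iff]
  constructor
  · have h := weyl_one_sided Be B lame lam hlame hlam ve v hve_on hv_on hve_eig hv_eig j
    rwa [opNorm_sub_comm'] at h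
  · exact weyl_one_sided B Be lam lame hlam hlame v ve hv_on hve_on hv_eig hve_eig j

/-- Error estimate of Sinkhorn MDS, abstract form.
`B` and `B_ε` are symmetric PSD matrices with eigenvalues `lam`, `lame`
(decreasing, 0-indexed: `lam ⟨j-1,_⟩` is `λ_j`) and orthonormal eigenbases
`v`, `ve` chosen with `⟨v_{j,ε}, v_j⟩ ≥ 0`.  For `1 ≤ k < N` with
`λ_k > λ_{k+1}` and `λ_k > 0`, assuming the Davis–Kahan-type bound,
the MDS embeddings `Φ(i)_j = √λ_j v_j(i)` and `Φ_ε(i)_j = √λ_{j,ε} v_{j,ε}(i)`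
satisfy
`Σ_i ‖Φ_ε(i) − Φ(i)‖² ≤ 16 λ_1 k ‖B_ε − B‖₂²/(λ_k − λ_{k+1})² + 2k‖B_ε − B‖₂`. -/
theorem sinkhorn_mds_error_estimate {N k : ℕ} (hk1 : 1 ≤ k) (hkN : k < N)
    (B Be : Matrix (Fin N) (Fin N) ℝ)
    (hB : B.PosSemidef) (hBe : Be.PosSemidef)
    (lam lame : Fin N → ℝ)
    (hlam : ∀ i j : Fin N, i ≤ j → lam j ≤ lam i)
    (hlame : ∀ i j : Fin N, i ≤ j → lame j ≤ lame i)
    (v ve : Fin N → Fin N → ℝ)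
    (hv_on : ∀ i j, (∑ x, v i x * v j x) = if i = j then (1 : ℝ) else 0)
    (hve_on : ∀ i j, (∑ x, ve i x * ve j x) = if i = j then (1 : ℝ) else 0)
    (hv_eig : ∀ j, B.mulVec (v j) = lam j • v j)
    (hve_eig : ∀ j, Be.mulVec (ve j) = lame j • ve j)
    (hsign : ∀ j, 0 ≤ ∑ x, ve j x * v j x)
    (hgap : lam ⟨k, hkN⟩ < lam ⟨k - 1, by omega⟩)
    (hpos : 0 < lam ⟨k - 1, by omega⟩)
    (hDK : ∑ j : Fin k,
        Real.sin (Real.arccos (∑ x, ve (Fin.castLE hkN.le j) x * v (Fin.castLE hkN.le j) x)) ^ 2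
      ≤ 4 * (k : ℝ) * opNorm (Be - B) ^ 2
          / (lam ⟨k - 1, by omega⟩ - lam ⟨k, hkN⟩) ^ 2) :
    ∑ i : Fin N, ∑ j : Fin k,
        (Real.sqrt (lame (Fin.castLE hkN.le j)) * ve (Fin.castLE hkN.le j) i
          - Real.sqrt (lam (Fin.castLE hkN.le j)) * v (Fin.castLE hkN.le j) i) ^ 2
      ≤ 16 * lam ⟨0, by omega⟩ * (k : ℝ)
            / (lam ⟨k - 1, by omega⟩ - lam ⟨k, hkN⟩) ^ 2 * opNorm (Be - B) ^ 2
        + 2 * (k : ℝ) * opNorm (Be - B) := by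
  classical
  have hδ0 : 0 ≤ opNorm (Be - B) := opNorm_nonneg' _
  -- nonnegativity of eigenvalues
  have hlam0 : ∀ j : Fin N, 0 ≤ lam j := by
    intro j
    have h := hB.dotProduct_mulVec_nonneg (v j)
    rw [hv_eig j] at h
    have hval : dotProduct (star (v j)) (lam j • v j)
        = lam j * ∑ x, v j x * v j x := by
      rw [Finset.mul_sum]
      simp only [dotProduct, Pi.star_apply, star_trivial, Pi.smul_apply, smul_eq_mul]
      exact Finset.sum_congr rfl fun x _ => by ring
    rw [hval, hv_on j j, if_pos rfl, mul_one] at h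
    exact h
  have hlame0 : ∀ j : Fin N, 0 ≤ lame j := by
    intro j
    have h := hBe.dotProduct_mulVec_nonneg (ve j)
    rw [hve_eig j] at h
    have hval : dotProduct (star (ve j)) (lame j • ve j)
        = lame j * ∑ x, ve j x * ve j x := by
      rw [Finset.mul_sum]
      simp only [dotProduct, Pi.star_apply, star_trivial, Pi.smul_apply, smul_eq_mul]
      exact Finset.sum_congr rfl fun x _ => by ring
    rw [hval, hve_on j j, if_pos rfl, mul_one] at h
    exact h
  have hlam1 : 0 ≤ lam ⟨0, by omega⟩ := hlam0 _
  -- per-index bound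
  have key : ∀ j : Fin k,
      (∑ i, (Real.sqrt (lame (Fin.castLE hkN.le j)) * ve (Fin.castLE hkN.le j) i
          - Real.sqrt (lam (Fin.castLE hkN.le j)) * v (Fin.castLE hkN.le j) i) ^ 2)
      ≤ 4 * lam ⟨0, by omega⟩ *
          Real.sin (Real.arccos
            (∑ x, ve (Fin.castLE hkN.le j) x * v (Fin.castLE hkN.le j) x)) ^ 2
        + 2 * opNorm (Be - B) := by
    intro j
    set J : Fin N := Fin.castLE hkN.le j with hJdef
    set a : ℝ := lame J with hadef
    set b : ℝ := lam J with hbdef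
    set c : ℝ := ∑ x, ve J x * v J x with hcdef
    have ha0 : 0 ≤ a := hlame0 J
    have hb0 : 0 ≤ b := hlam0 J
    have hc0 : 0 ≤ c := hsign J
    have hc1 : c ≤ 1 := by
      have h := Finset.sum_mul_sq_le_sq_mul_sq Finset.univ (fun x => ve J x) (fun x => v J x)
      have h1 : (∑ x, ve J x ^ 2) = 1 := by
        have := hve_on J J
        rw [if_pos rfl] at this
        simpa [sq] using this
      have h2 : (∑ x, v J x ^ 2) = 1 := by
        have := hv_on J J
        rw [if_pos rfl] at this
        simpa [sq] using this
      rw [h1, h2, one_mul] at h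
      nlinarith
    have hsin : Real.sin (Real.arccos c) ^ 2 = 1 - c ^ 2 := by
      rw [Real.sin_arccos, Real.sq_sqrt (by nlinarith)]
    -- the difference sum
    have hsub : (∑ i, (ve J i - v J i) ^ 2) = 2 - 2 * c := by
      have hexp : ∀ i ∈ Finset.univ, (ve J i - v J i) ^ 2
          = ve J i * ve J i - 2 * (ve J i * v J i) + v J i * v J i := fun i _ => by ring
      rw [Finset.sum_congr rfl hexp, Finset.sum_add_distrib, Finset.sum_sub_distrib,
        ← Finset.mul_sum, hve_on J J, hv_on J J, if_pos rfl, ← hcdef]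
      ring
    have hveJ : (∑ i, ve J i * ve J i) = 1 := by
      have := hve_on J J; rwa [if_pos rfl] at this
    have step1 : (∑ i, (Real.sqrt a * ve J i - Real.sqrt b * v J i) ^ 2)
        ≤ 2 * b * (2 - 2 * c) + 2 * (Real.sqrt a - Real.sqrt b) ^ 2 := by
      have hpt : ∀ i ∈ Finset.univ,
          (Real.sqrt a * ve J i - Real.sqrt b * v J i) ^ 2
          ≤ 2 * (b * (ve J i - v J i) ^ 2)
            + 2 * ((Real.sqrt a - Real.sqrt b) ^ 2 * (ve J i * ve J i)) := by
        intro i _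
        have hb2 := Real.sq_sqrt hb0
        nlinarith [sq_nonneg (Real.sqrt b * (ve J i - v J i)
          - (Real.sqrt a - Real.sqrt b) * ve J i), hb2, sq_nonneg (ve J i - v J i)]
      calc (∑ i, (Real.sqrt a * ve J i - Real.sqrt b * v J i) ^ 2)
          ≤ ∑ i, (2 * (b * (ve J i - v J i) ^ 2)
              + 2 * ((Real.sqrt a - Real.sqrt b) ^ 2 * (ve J i * ve J i))) :=
            Finset.sum_le_sum hpt
        _ = 2 * b * (∑ i, (ve J i - v J i) ^ 2)
              + 2 * (Real.sqrt a - Real.sqrt b) ^ 2 * (∑ i, ve J i * ve J i) := by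
            rw [Finset.sum_add_distrib]
            congr 1
            · rw [Finset.mul_sum]
              exact Finset.sum_congr rfl fun i _ => by ring
            · rw [Finset.mul_sum]
              exact Finset.sum_congr rfl fun i _ => by ring
        _ = 2 * b * (2 - 2 * c) + 2 * (Real.sqrt a - Real.sqrt b) ^ 2 := by
            rw [hsub, hveJ]; ring
    have step2 : 2 * b * (2 - 2 * c) ≤ 4 * b * (1 - c ^ 2) := by
      nlinarith [mul_nonneg (mul_nonneg hb0 hc0) (sub_nonneg.2 hc1)]
    have step3 : 2 * (Real.sqrt a - Real.sqrt b) ^ 2 ≤ 2 * opNorm (Be - B) := by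
      have h1 := sqrt_sub_sq_le_abs ha0 hb0
      have h2 := weyl_abs B Be lam lame hlam hlame v ve hv_on hve_on hv_eig hve_eig J
      linarith
    have hbl : b ≤ lam ⟨0, by omega⟩ := hlam ⟨0, by omega⟩ J (by simp [Fin.le_def])
    have step4 : 4 * b * (1 - c ^ 2) ≤ 4 * lam ⟨0, by omega⟩ * (1 - c ^ 2) := by
      have h1 : (0:ℝ) ≤ 1 - c ^ 2 := by nlinarith
      nlinarith
    rw [hsin]
    calc (∑ i, (Real.sqrt a * ve J i - Real.sqrt b * v J i) ^ 2)
        ≤ 2 * b * (2 - 2 * c) + 2 * (Real.sqrt a - Real.sqrt b) ^ 2 := step1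
      _ ≤ 4 * lam ⟨0, by omega⟩ * (1 - c ^ 2) + 2 * opNorm (Be - B) := by linarith
  -- assemble
  have hswap : (∑ i : Fin N, ∑ j : Fin k,
      (Real.sqrt (lame (Fin.castLE hkN.le j)) * ve (Fin.castLE hkN.le j) i
        - Real.sqrt (lam (Fin.castLE hkN.le j)) * v (Fin.castLE hkN.le j) i) ^ 2)
      = ∑ j : Fin k, ∑ i : Fin N,
      (Real.sqrt (lame (Fin.castLE hkN.le j)) * ve (Fin.castLE hkN.le j) i
        - Real.sqrt (lam (Fin.castLE hkN.le j)) * v (Fin.castLE hkN.le j) i) ^ 2 :=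
    Finset.sum_comm
  rw [hswap]
  have hsins : (0:ℝ) ≤ ∑ j : Fin k,
      Real.sin (Real.arccos (∑ x, ve (Fin.castLE hkN.le j) x * v (Fin.castLE hkN.le j) x)) ^ 2 :=
    Finset.sum_nonneg fun j _ => sq_nonneg _
  calc (∑ j : Fin k, ∑ i : Fin N,
      (Real.sqrt (lame (Fin.castLE hkN.le j)) * ve (Fin.castLE hkN.le j) i
        - Real.sqrt (lam (Fin.castLE hkN.le j)) * v (Fin.castLE hkN.le j) i) ^ 2)
      ≤ ∑ j : Fin k, (4 * lam ⟨0, by omega⟩ *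
          Real.sin (Real.arccos
            (∑ x, ve (Fin.castLE hkN.le j) x * v (Fin.castLE hkN.le j) x)) ^ 2
        + 2 * opNorm (Be - B)) := Finset.sum_le_sum fun j _ => key j
    _ = 4 * lam ⟨0, by omega⟩ * (∑ j : Fin k,
          Real.sin (Real.arccos
            (∑ x, ve (Fin.castLE hkN.le j) x * v (Fin.castLE hkN.le j) x)) ^ 2)
        + (k : ℝ) * (2 * opNorm (Be - B)) := by
        rw [Finset.sum_add_distrib, ← Finset.mul_sum, Finset.sum_const, Finset.card_univ,
          Fintype.card_fin, nsmul_eq_mul]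
    _ ≤ 4 * lam ⟨0, by omega⟩ * (4 * (k : ℝ) * opNorm (Be - B) ^ 2
          / (lam ⟨k - 1, by omega⟩ - lam ⟨k, hkN⟩) ^ 2)
        + (k : ℝ) * (2 * opNorm (Be - B)) := by
        have h4 : (0:ℝ) ≤ 4 * lam ⟨0, by omega⟩ := by linarith
        exact add_le_add_left (mul_le_mul_of_nonneg_left hDK h4) _
    _ = 16 * lam ⟨0, by omega⟩ * (k : ℝ)
            / (lam ⟨k - 1, by omega⟩ - lam ⟨k, hkN⟩) ^ 2 * opNorm (Be - B) ^ 2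
        + 2 * (k : ℝ) * opNorm (Be - B) := by ring
end
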